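/- In a finite binary-action supermodular game, the set of Nash equilibria is nonempty and closed under the operations x, y ↦ f⁺(x ∨ y) and x, y ↦ f⁻(x ∧ y); in particular, for any two equilibria x and y, f⁺(x ∨ y) is the least Nash equilibrium that is above both x and y, and f⁻(x ∧ y) is the greatest Nash equilibrium below both. -/

import Mathlib

variable {V : Type*} [Fintype V] [DecidableEq V]

/-- A configuration assigns each player an action in `{-1, +1}` (as integers). -/
def Conf (x : V → ℤ) : Prop := ∀ i, x i = 1 ∨ x i = -1

/-- Supermodularity (increasing differences) for a binary-action game with
utilities `u`. -/
def Supermodular (u : V → (V → ℤ) → ℝ) : Prop :=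
  ∀ (i : V) (x y : V → ℤ), Conf x → Conf y → (∀ j, j ≠ i → y j ≤ x j) →
    u i (Function.update y i 1) - u i (Function.update y i (-1)) ≤
      u i (Function.update x i 1) - u i (Function.update x i (-1))

/-- One step of an improvement path: a single player flips her action and
strictly increases her utility. -/
def ImpStep (u : V → (V → ℤ) → ℝ) (x y : V → ℤ) : Prop :=
  ∃ i : V, y = Function.update x i (-(x i)) ∧ u i x < u i y

/-- A monotone improvement step (the active player switches from -1 to +1). -/
def MonStep (u : V → (V → ℤ) → ℝ) (x y : V → ℤ) : Prop :=
  ImpStep u x y ∧ x ≤ y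

/-- An anti-monotone improvement step (the active player switches from +1 to -1). -/
def AntiStep (u : V → (V → ℤ) → ℝ) (x y : V → ℤ) : Prop :=
  ImpStep u x y ∧ y ≤ x

/-- `y` is reachable from `x` by an improvement path. -/
def ImpReach (u : V → (V → ℤ) → ℝ) : (V → ℤ) → (V → ℤ) → Prop :=
  Relation.ReflTransGen (ImpStep u)

/-- `y` is reachable from `x` by a monotone improvement path. -/
def MonReach (u : V → (V → ℤ) → ℝ) : (V → ℤ) → (V → ℤ) → Prop :=
  Relation.ReflTransGen (MonStep u)

/-- `y` is reachable from `x` by an anti-monotone improvement path. -/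
def AntiReach (u : V → (V → ℤ) → ℝ) : (V → ℤ) → (V → ℤ) → Prop :=
  Relation.ReflTransGen (AntiStep u)

/-- `x` is a (pure strategy Nash) equilibrium: no unilateral flip strictly
improves the deviator's utility. -/
def IsNash (u : V → (V → ℤ) → ℝ) (x : V → ℤ) : Prop :=
  ∀ i : V, u i (Function.update x i (-(x i))) ≤ u i x

open Classical in
/-- `fplus u x` is the componentwise supremum of the set of configurations
reachable from `x` by monotone improvement paths. -/
noncomputable def fplus (u : V → (V → ℤ) → ℝ) (x : V → ℤ) : V → ℤ :=
  fun i => if ∃ y, MonReach u x y ∧ y i = 1 then 1 else -1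

open Classical in
/-- `fminus u x` is the componentwise infimum of the set of configurations
reachable from `x` by anti-monotone improvement paths. -/
noncomputable def fminus (u : V → (V → ℤ) → ℝ) (x : V → ℤ) : V → ℤ :=
  fun i => if ∃ y, AntiReach u x y ∧ y i = -1 then -1 else 1

section Aux

variable {u : V → (V → ℤ) → ℝ}

/-- The gain of action `1` over action `-1` for player `i` at configuration `x`. -/
noncomputable def Dgain (u : V → (V → ℤ) → ℝ) (i : V) (x : V → ℤ) : ℝ :=
  u i (Function.update x i 1) - u i (Function.update x i (-1))

lemma Dgain_update (i : V) (x : V → ℤ) (c : ℤ) :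
    Dgain u i (Function.update x i c) = Dgain u i x := by
  simp [Dgain, Function.update_idem]

lemma conf_update {x : V → ℤ} (hx : Conf x) {a : ℤ} (ha : a = 1 ∨ a = -1) (i : V) :
    Conf (Function.update x i a) := by
  intro j
  rcases eq_or_ne j i with rfl | hj
  · simpa using ha
  · simpa [Function.update_of_ne hj] using hx j

lemma hsm_D (hsm : Supermodular u) (i : V) {x y : V → ℤ} (hx : Conf x) (hy : Conf y)
    (h : ∀ j, j ≠ i → y j ≤ x j) : Dgain u i y ≤ Dgain u i x := hsm i x y hx hy h

lemma Dgain_nonneg_of_nash {x : V → ℤ} {i : V} (hx : Conf x) (hn : IsNash u x)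
    (h : x i = 1) : 0 ≤ Dgain u i x := by
  have h1 : Function.update x i 1 = x := by rw [← h]; exact Function.update_eq_self i x
  have h2 : Function.update x i (-(x i)) = Function.update x i (-1) := by rw [h]
  have := hn i
  rw [h2] at this
  simp only [Dgain, h1]
  linarith

lemma Dgain_nonpos_of_nash {x : V → ℤ} {i : V} (hx : Conf x) (hn : IsNash u x)
    (h : x i = -1) : Dgain u i x ≤ 0 := by
  have h1 : Function.update x i (-1) = x := by rw [← h]; exact Function.update_eq_self i x
  have h2 : Function.update x i (-(x i)) = Function.update x i 1 := by rw [h]; norm_num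
  have := hn i
  rw [h2] at this
  simp only [Dgain, h1]
  linarith

lemma nash_of {w : V → ℤ} (hw : Conf w)
    (h1 : ∀ i, w i = 1 → 0 ≤ Dgain u i w)
    (h2 : ∀ i, w i = -1 → Dgain u i w ≤ 0) : IsNash u w := by
  intro i
  rcases hw i with h | h
  · have hu1 : Function.update w i 1 = w := by rw [← h]; exact Function.update_eq_self i w
    have h2' : Function.update w i (-(w i)) = Function.update w i (-1) := by rw [h]
    rw [h2']
    have := h1 i h
    simp only [Dgain, hu1] at this
    linarith
  · have hu1 : Function.update w i (-1) = w := by rw [← h]; exact Function.update_eq_self i w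
    have h2' : Function.update w i (-(w i)) = Function.update w i 1 := by rw [h]; norm_num
    rw [h2']
    have := h2 i h
    simp only [Dgain, hu1] at this
    linarith

lemma monStep_elim {x y : V → ℤ} (hx : Conf x) (h : MonStep u x y) :
    ∃ i, x i = -1 ∧ y = Function.update x i 1 ∧ 0 < Dgain u i x := by
  obtain ⟨⟨i, rfl, hlt⟩, hle⟩ := h
  rcases hx i with h1 | h1
  · exfalso
    have := hle i
    rw [Function.update_self, h1] at this
    norm_num at this
  · refine ⟨i, h1, by rw [h1]; norm_num, ?_⟩
    have hx' : Function.update x i (-(x i)) = Function.update x i 1 := by rw [h1]; norm_num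
    have hx0 : Function.update x i (-1) = x := by rw [← h1]; exact Function.update_eq_self i x
    rw [hx'] at hlt
    simp only [Dgain, hx0]
    linarith

lemma monStep_intro {x : V → ℤ} {i : V} (hx : x i = -1) (hD : 0 < Dgain u i x) :
    MonStep u x (Function.update x i 1) := by
  have hx0 : Function.update x i (-1) = x := by rw [← hx]; exact Function.update_eq_self i x
  constructor
  · refine ⟨i, by rw [hx]; norm_num, ?_⟩
    have : u i x < u i (Function.update x i 1) := by
      simp only [Dgain, hx0] at hD; linarith
    exact this
  · intro j
    rcases eq_or_ne j i with rfl | hj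
    · rw [Function.update_self, hx]; norm_num
    · rw [Function.update_of_ne hj]

lemma antiStep_elim {x y : V → ℤ} (hx : Conf x) (h : AntiStep u x y) :
    ∃ i, x i = 1 ∧ y = Function.update x i (-1) ∧ Dgain u i x < 0 := by
  obtain ⟨⟨i, rfl, hlt⟩, hle⟩ := h
  rcases hx i with h1 | h1
  · refine ⟨i, h1, by rw [h1], ?_⟩
    have hx' : Function.update x i (-(x i)) = Function.update x i (-1) := by rw [h1]
    have hx0 : Function.update x i 1 = x := by rw [← h1]; exact Function.update_eq_self i x
    rw [hx'] at hlt
    simp only [Dgain, hx0]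
    linarith
  · exfalso
    have := hle i
    rw [Function.update_self, h1] at this
    norm_num at this

lemma antiStep_intro {x : V → ℤ} {i : V} (hx : x i = 1) (hD : Dgain u i x < 0) :
    AntiStep u x (Function.update x i (-1)) := by
  have hx0 : Function.update x i 1 = x := by rw [← hx]; exact Function.update_eq_self i x
  constructor
  · refine ⟨i, by rw [hx], ?_⟩
    have : u i x < u i (Function.update x i (-1)) := by
      simp only [Dgain, hx0] at hD; linarith
    exact this
  · intro j
    rcases eq_or_ne j i with rfl | hj
    · rw [Function.update_self, hx]; norm_num
    · rw [Function.update_of_ne hj]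

lemma monReach_conf {x y : V → ℤ} (hx : Conf x) (h : MonReach u x y) : Conf y := by
  have h' : Relation.ReflTransGen (MonStep u) x y := h
  clear h
  induction h' with
  | refl => exact hx
  | tail _ hstep ih =>
    obtain ⟨i, _, rfl, _⟩ := monStep_elim ih hstep
    exact conf_update ih (Or.inl rfl) i

lemma antiReach_conf {x y : V → ℤ} (hx : Conf x) (h : AntiReach u x y) : Conf y := by
  have h' : Relation.ReflTransGen (AntiStep u) x y := h
  clear h
  induction h' with
  | refl => exact hx
  | tail _ hstep ih =>
    obtain ⟨i, _, rfl, _⟩ := antiStep_elim ih hstep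
    exact conf_update ih (Or.inr rfl) i

lemma monReach_le {x y : V → ℤ} (h : MonReach u x y) : x ≤ y := by
  have h' : Relation.ReflTransGen (MonStep u) x y := h
  clear h
  induction h' with
  | refl => exact le_refl x
  | tail _ hstep ih => exact ih.trans hstep.2

lemma antiReach_le {x y : V → ℤ} (h : AntiReach u x y) : y ≤ x := by
  have h' : Relation.ReflTransGen (AntiStep u) x y := h
  clear h
  induction h' with
  | refl => exact le_refl x
  | tail _ hstep ih => exact hstep.2.trans ih

/-- Any configuration reachable by a monotone improvement path stays below any
Nash equilibrium that dominates the start. -/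
lemma reach_le_nash (hsm : Supermodular u) {z z' w : V → ℤ} (hz : Conf z) (hz' : Conf z')
    (hn : IsNash u z') (hle : z ≤ z') (hr : MonReach u z w) : w ≤ z' := by
  have hr' : Relation.ReflTransGen (MonStep u) z w := hr
  clear hr
  induction hr' with
  | refl => exact hle
  | @tail b c hb hstep ih =>
    have hcb : Conf b := monReach_conf hz hb
    obtain ⟨i, hbi, rfl, hD⟩ := monStep_elim hcb hstep
    intro j
    rcases eq_or_ne j i with rfl | hj
    · rw [Function.update_self]
      rcases hz' j with h | h
      · rw [h]
      · exfalso
        have hDz : Dgain u j b ≤ Dgain u j z' :=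
          hsm_D hsm j hz' hcb (fun k _ => ih k)
        have := Dgain_nonpos_of_nash hz' hn h
        linarith
    · rw [Function.update_of_ne hj]; exact ih j

/-- Dual: anti-monotone reachable set stays above any Nash below the start. -/
lemma nash_le_reach (hsm : Supermodular u) {z z' w : V → ℤ} (hz : Conf z) (hz' : Conf z')
    (hn : IsNash u z') (hle : z' ≤ z) (hr : AntiReach u z w) : z' ≤ w := by
  have hr' : Relation.ReflTransGen (AntiStep u) z w := hr
  clear hr
  induction hr' with
  | refl => exact hle
  | @tail b c hb hstep ih =>
    have hcb : Conf b := antiReach_conf hz hb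
    obtain ⟨i, hbi, rfl, hD⟩ := antiStep_elim hcb hstep
    intro j
    rcases eq_or_ne j i with rfl | hj
    · rw [Function.update_self]
      rcases hz' j with h | h
      · exfalso
        have hDz : Dgain u j z' ≤ Dgain u j b :=
          hsm_D hsm j hcb hz' (fun k _ => ih k)
        have := Dgain_nonneg_of_nash hz' hn h
        linarith
      · rw [h]
    · rw [Function.update_of_ne hj]; exact ih j

lemma card_flip_up {x : V → ℤ} {i : V} (h : x i = -1) :
    (Finset.univ.filter (fun j => Function.update x i 1 j = -1)).card
      < (Finset.univ.filter (fun j => x j = -1)).card := by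
  apply Finset.card_lt_card
  constructor
  · intro j hj
    simp only [Finset.mem_filter, Finset.mem_univ, true_and] at hj ⊢
    rcases eq_or_ne j i with rfl | hji
    · rw [Function.update_self] at hj; norm_num at hj
    · rwa [Function.update_of_ne hji] at hj
  · intro hsub
    have := hsub (Finset.mem_filter.mpr ⟨Finset.mem_univ i, h⟩)
    simp only [Finset.mem_filter, Finset.mem_univ, true_and, Function.update_self] at this
    norm_num at this

lemma card_flip_down {x : V → ℤ} {i : V} (h : x i = 1) :
    (Finset.univ.filter (fun j => Function.update x i (-1) j = 1)).card
      < (Finset.univ.filter (fun j => x j = 1)).card := by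
  apply Finset.card_lt_card
  constructor
  · intro j hj
    simp only [Finset.mem_filter, Finset.mem_univ, true_and] at hj ⊢
    rcases eq_or_ne j i with rfl | hji
    · rw [Function.update_self] at hj; norm_num at hj
    · rwa [Function.update_of_ne hji] at hj
  · intro hsub
    have := hsub (Finset.mem_filter.mpr ⟨Finset.mem_univ i, h⟩)
    simp only [Finset.mem_filter, Finset.mem_univ, true_and, Function.update_self] at this
    norm_num at this

/-- Greedy monotone dynamics terminate at a Nash equilibrium, starting from any
configuration where all `+1` players are content. -/
lemma greedy_plus (hsm : Supermodular u) :
    ∀ n (w : V → ℤ), (Finset.univ.filter (fun j => w j = -1)).card ≤ n → Conf w →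
      (∀ i, w i = 1 → 0 ≤ Dgain u i w) →
      ∃ t, MonReach u w t ∧ Conf t ∧ IsNash u t := by
  intro n
  induction n with
  | zero =>
    intro w hcard hw hQ
    refine ⟨w, Relation.ReflTransGen.refl, hw, nash_of hw hQ ?_⟩
    intro i hi
    exfalso
    have : i ∈ Finset.univ.filter (fun j => w j = -1) :=
      Finset.mem_filter.mpr ⟨Finset.mem_univ i, hi⟩
    have := Finset.card_pos.mpr ⟨i, this⟩
    omega
  | succ n ih =>
    intro w hcard hw hQ
    by_cases hstep : ∃ i, w i = -1 ∧ 0 < Dgain u i w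
    · obtain ⟨i, hwi, hD⟩ := hstep
      set w' := Function.update w i 1 with hw'
      have hcw' : Conf w' := conf_update hw (Or.inl rfl) i
      have hlew' : w ≤ w' := (monStep_intro hwi hD).2
      have hQ' : ∀ j, w' j = 1 → 0 ≤ Dgain u j w' := by
        intro j hj
        rcases eq_or_ne j i with rfl | hji
        · rw [hw', Dgain_update]; linarith
        · have hwj : w j = 1 := by rwa [hw', Function.update_of_ne hji] at hj
          have : Dgain u j w ≤ Dgain u j w' :=
            hsm_D hsm j hcw' hw (fun k _ => hlew' k)
          have := hQ j hwj
          linarith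
      have hcard' : (Finset.univ.filter (fun j => w' j = -1)).card ≤ n := by
        simp only [hw']
        have := card_flip_up (x := w) (i := i) hwi
        omega
      obtain ⟨t, hrt, hct, hnt⟩ := ih w' hcard' hcw' hQ'
      exact ⟨t, Relation.ReflTransGen.head (monStep_intro hwi hD) hrt, hct, hnt⟩
    · push_neg at hstep
      refine ⟨w, Relation.ReflTransGen.refl, hw, nash_of hw hQ ?_⟩
      intro i hi
      exact le_of_not_gt (by simpa using hstep i hi)

/-- Greedy anti-monotone dynamics terminate at a Nash equilibrium, starting from
any configuration where all `-1` players are content. -/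
lemma greedy_minus (hsm : Supermodular u) :
    ∀ n (w : V → ℤ), (Finset.univ.filter (fun j => w j = 1)).card ≤ n → Conf w →
      (∀ i, w i = -1 → Dgain u i w ≤ 0) →
      ∃ t, AntiReach u w t ∧ Conf t ∧ IsNash u t := by
  intro n
  induction n with
  | zero =>
    intro w hcard hw hQ
    refine ⟨w, Relation.ReflTransGen.refl, hw, nash_of hw ?_ hQ⟩
    intro i hi
    exfalso
    have : i ∈ Finset.univ.filter (fun j => w j = 1) :=
      Finset.mem_filter.mpr ⟨Finset.mem_univ i, hi⟩
    have := Finset.card_pos.mpr ⟨i, this⟩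
    omega
  | succ n ih =>
    intro w hcard hw hQ
    by_cases hstep : ∃ i, w i = 1 ∧ Dgain u i w < 0
    · obtain ⟨i, hwi, hD⟩ := hstep
      set w' := Function.update w i (-1) with hw'
      have hcw' : Conf w' := conf_update hw (Or.inr rfl) i
      have hlew' : w' ≤ w := (antiStep_intro hwi hD).2
      have hQ' : ∀ j, w' j = -1 → Dgain u j w' ≤ 0 := by
        intro j hj
        rcases eq_or_ne j i with rfl | hji
        · rw [hw', Dgain_update]; linarith
        · have hwj : w j = -1 := by rwa [hw', Function.update_of_ne hji] at hj
          have : Dgain u j w' ≤ Dgain u j w :=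
            hsm_D hsm j hw hcw' (fun k _ => hlew' k)
          have := hQ j hwj
          linarith
      have hcard' : (Finset.univ.filter (fun j => w' j = 1)).card ≤ n := by
        simp only [hw']
        have := card_flip_down (x := w) (i := i) hwi
        omega
      obtain ⟨t, hrt, hct, hnt⟩ := ih w' hcard' hcw' hQ'
      exact ⟨t, Relation.ReflTransGen.head (antiStep_intro hwi hD) hrt, hct, hnt⟩
    · push_neg at hstep
      refine ⟨w, Relation.ReflTransGen.refl, hw, nash_of hw ?_ hQ⟩
      intro i hi
      exact le_of_not_gt (by simpa using hstep i hi)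

open Classical in
lemma fplus_eq_of_reach (hsm : Supermodular u) {z t : V → ℤ} (hz : Conf z)
    (hr : MonReach u z t) (hnt : IsNash u t) : fplus u z = t := by
  have hct : Conf t := monReach_conf hz hr
  funext i
  simp only [fplus]
  rcases hct i with h1 | h1
  · rw [if_pos ⟨t, hr, h1⟩, h1]
  · rw [if_neg, h1]
    rintro ⟨y, hy, hyi⟩
    have hle : y ≤ t := reach_le_nash hsm hz hct hnt (monReach_le hr) hy
    have := hle i
    rw [hyi, h1] at this
    norm_num at this

open Classical in
lemma fminus_eq_of_reach (hsm : Supermodular u) {z t : V → ℤ} (hz : Conf z)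
    (hr : AntiReach u z t) (hnt : IsNash u t) : fminus u z = t := by
  have hct : Conf t := antiReach_conf hz hr
  funext i
  simp only [fminus]
  rcases hct i with h1 | h1
  · rw [if_neg, h1]
    rintro ⟨y, hy, hyi⟩
    have hle : t ≤ y := nash_le_reach hsm hz hct hnt (antiReach_le hr) hy
    have := hle i
    rw [hyi, h1] at this
    norm_num at this
  · rw [if_pos ⟨t, hr, h1⟩, h1]

end Aux

/-- the Nash set is nonempty; for Nash equilibria `x, y`,
`fplus u (x ⊔ y)` is the least Nash equilibrium above both and
`fminus u (x ⊓ y)` is the greatest Nash equilibrium below both. -/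
theorem nash_lattice (u : V → (V → ℤ) → ℝ) (hsm : Supermodular u) :
    (∃ x, Conf x ∧ IsNash u x) ∧
    ∀ x y : V → ℤ, Conf x → Conf y → IsNash u x → IsNash u y →
      (IsNash u (fplus u (x ⊔ y)) ∧ x ≤ fplus u (x ⊔ y) ∧ y ≤ fplus u (x ⊔ y) ∧
        ∀ z, Conf z → IsNash u z → x ≤ z → y ≤ z → fplus u (x ⊔ y) ≤ z) ∧
      (IsNash u (fminus u (x ⊓ y)) ∧ fminus u (x ⊓ y) ≤ x ∧ fminus u (x ⊓ y) ≤ y ∧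
        ∀ z, Conf z → IsNash u z → z ≤ x → z ≤ y → z ≤ fminus u (x ⊓ y)) := by
  constructor
  · -- existence: run anti-monotone dynamics from the all-ones configuration
    have hc1 : Conf (fun _ : V => (1 : ℤ)) := fun _ => Or.inl rfl
    obtain ⟨t, _, hct, hnt⟩ :=
      greedy_minus hsm (Finset.univ.filter (fun j : V => (1 : ℤ) = 1)).card
        (fun _ => 1) le_rfl hc1 (fun i hi => by norm_num at hi)
    exact ⟨t, hct, hnt⟩
  · intro x y hcx hcy hnx hny
    constructor
    · -- join part
      have hcz : Conf (x ⊔ y) := by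
        intro i
        rcases hcx i with h | h <;> rcases hcy i with h' | h' <;>
          simp [Pi.sup_apply, h, h'] <;> omega
      have hQ : ∀ i, (x ⊔ y) i = 1 → 0 ≤ Dgain u i (x ⊔ y) := by
        intro i hi
        have hxy : x i = 1 ∨ y i = 1 := by
          rcases hcx i with h | h
          · exact Or.inl h
          · rcases hcy i with h' | h'
            · exact Or.inr h'
            · exfalso; rw [Pi.sup_apply, h, h'] at hi; norm_num at hi
        rcases hxy with h | h
        · have h1 := Dgain_nonneg_of_nash hcx hnx h
          have h2 := hsm_D hsm i hcz hcx (fun j _ => (le_sup_left : x ≤ x ⊔ y) j)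
          linarith
        · have h1 := Dgain_nonneg_of_nash hcy hny h
          have h2 := hsm_D hsm i hcz hcy (fun j _ => (le_sup_right : y ≤ x ⊔ y) j)
          linarith
      obtain ⟨t, hrt, hct, hnt⟩ :=
        greedy_plus hsm (Finset.univ.filter (fun j => (x ⊔ y) j = -1)).card
          (x ⊔ y) le_rfl hcz hQ
      have hfe := fplus_eq_of_reach hsm hcz hrt hnt
      rw [hfe]
      refine ⟨hnt, le_trans le_sup_left (monReach_le hrt),
        le_trans le_sup_right (monReach_le hrt), ?_⟩
      intro z hcz' hnz hxz hyz
      exact reach_le_nash hsm hcz hcz' hnz (sup_le hxz hyz) hrt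
    · -- meet part
      have hcz : Conf (x ⊓ y) := by
        intro i
        rcases hcx i with h | h <;> rcases hcy i with h' | h' <;>
          simp [Pi.inf_apply, h, h'] <;> omega
      have hQ : ∀ i, (x ⊓ y) i = -1 → Dgain u i (x ⊓ y) ≤ 0 := by
        intro i hi
        have hxy : x i = -1 ∨ y i = -1 := by
          rcases hcx i with h | h
          · rcases hcy i with h' | h'
            · exfalso; rw [Pi.inf_apply, h, h'] at hi; norm_num at hi
            · exact Or.inr h'
          · exact Or.inl h
        rcases hxy with h | h
        · have h1 := Dgain_nonpos_of_nash hcx hnx h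
          have h2 := hsm_D hsm i hcx hcz (fun j _ => (inf_le_left : x ⊓ y ≤ x) j)
          linarith
        · have h1 := Dgain_nonpos_of_nash hcy hny h
          have h2 := hsm_D hsm i hcy hcz (fun j _ => (inf_le_right : x ⊓ y ≤ y) j)
          linarith
      obtain ⟨t, hrt, hct, hnt⟩ :=
        greedy_minus hsm (Finset.univ.filter (fun j => (x ⊓ y) j = 1)).card
          (x ⊓ y) le_rfl hcz hQ
      have hfe := fminus_eq_of_reach hsm hcz hrt hnt
      rw [hfe]
      refine ⟨hnt, le_trans (antiReach_le hrt) inf_le_left,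
        le_trans (antiReach_le hrt) inf_le_right, ?_⟩
      intro z hcz' hnz hxz hyz
      exact nash_le_reach hsm hcz hcz' hnz (le_inf hxz hyz) hrt
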